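/- Correctness of the gradient descent output (Lemma 1.2): assume 0 < ε ≤ 1/2, α ≥ 1, β > 0, and let b, π ∈ ℝⁿ satisfy bᵀπ = 1 and φ_β(π) ≥ 4·ln(4m)/(ε·β). Let P = I − πbᵀ and b̃ = Pᵀ∇φ_β(π). Let h̃ ∈ ℝⁿ satisfy ‖W₋⁻¹Aᵀh̃‖_∞ ≤ 1 and ‖R★AᵀPh̃‖_∞ > 0, and suppose δ := b̃ᵀh̃ / ‖R★AᵀPh̃‖_∞ ≤ ε/(8·α·λ²). Let x₁ ∈ ℝᵐ satisfy Ax₁ = ∇φ_β(π) and p(W★x₁) ≤ 1 + ε/8, and let x₂ ∈ ℝᵐ satisfy Ax₂ = b̃ and ‖W₋x₂‖₁ ≤ α·b̃ᵀh̃. Then x := (x₁ − x₂)/(πᵀ∇φ_β(π)) and y := π / q(R★Aᵀπ) are well defined and satisfy Ax = b, q(R★Aᵀy) ≤ 1, and p(W★x) ≤ (1 + ε)·bᵀy. -/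

import Mathlib

open Matrix BigOperators

/-- Asymmetric "norm" `p(v) = Σᵢ max(0, vᵢ)`. -/
noncomputable def pnorm {d : Type*} [Fintype d] (v : d → ℝ) : ℝ := ∑ i, max (v i) 0

/-- Asymmetric "norm" `q(v) = max(0, maxᵢ vᵢ)`. -/
noncomputable def qnorm {d : Type*} [Fintype d] (v : d → ℝ) : ℝ :=
  Finset.univ.fold max 0 v

/-- ∞-norm `‖v‖_∞ = maxᵢ |vᵢ|` (as `max(0, maxᵢ |vᵢ|)`, which agrees with it). -/
noncomputable def infnorm {d : Type*} [Fintype d] (v : d → ℝ) : ℝ :=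
  Finset.univ.fold max 0 (fun i => |v i|)

/-- 1-norm `‖v‖₁ = Σᵢ |vᵢ|`. -/
noncomputable def onenorm {d : Type*} [Fintype d] (v : d → ℝ) : ℝ := ∑ i, |v i|

/-- `W★ : ℝᵐ → ℝ²ᵐ`, sending `x` to `(W₊x, −W₋x)`. -/
noncomputable def Wstar {m : ℕ} (wp wm : Fin m → ℝ) (x : Fin m → ℝ) : Fin m ⊕ Fin m → ℝ :=
  Sum.elim (fun e => wp e * x e) (fun e => -(wm e * x e))

/-- `R★ : ℝᵐ → ℝ²ᵐ`, sending `x` to `(W₊⁻¹x, −W₋⁻¹x)`. -/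
noncomputable def Rstar {m : ℕ} (wp wm : Fin m → ℝ) (x : Fin m → ℝ) : Fin m ⊕ Fin m → ℝ :=
  Sum.elim (fun e => x e / wp e) (fun e => -(x e / wm e))

/-- The transpose `R★ᵀ : ℝ²ᵐ → ℝᵐ`. -/
noncomputable def RstarT {m : ℕ} (wp wm : Fin m → ℝ) (g : Fin m ⊕ Fin m → ℝ) : Fin m → ℝ :=
  fun e => g (Sum.inl e) / wp e - g (Sum.inr e) / wm e

/-- Soft-max `lse_β(v) = (1/β)·ln(Σᵢ e^{β·vᵢ})`. -/
noncomputable def lse {d : Type*} [Fintype d] (β : ℝ) (v : d → ℝ) : ℝ :=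
  (1 / β) * Real.log (∑ i, Real.exp (β * v i))

/-- Gradient of the soft-max: `∇lse_β(v)ᵢ = e^{β·vᵢ}/Σⱼ e^{β·vⱼ}`. -/
noncomputable def gradLse {d : Type*} [Fintype d] (β : ℝ) (v : d → ℝ) : d → ℝ :=
  fun i => Real.exp (β * v i) / ∑ j, Real.exp (β * v j)

/-- Potential `φ_β(π) = lse_β(R★Aᵀπ)`. -/
noncomputable def pot {n m : ℕ} (A : Matrix (Fin n) (Fin m) ℝ) (wp wm : Fin m → ℝ)
    (β : ℝ) (π : Fin n → ℝ) : ℝ :=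
  lse β (Rstar wp wm (Aᵀ *ᵥ π))

/-- Gradient of the potential: `∇φ_β(π) = A·R★ᵀ·∇lse_β(R★Aᵀπ)`. -/
noncomputable def gradPot {n m : ℕ} (A : Matrix (Fin n) (Fin m) ℝ) (wp wm : Fin m → ℝ)
    (β : ℝ) (π : Fin n → ℝ) : Fin n → ℝ :=
  A *ᵥ RstarT wp wm (gradLse β (Rstar wp wm (Aᵀ *ᵥ π)))

section Helpers
variable {d : Type*} [Fintype d]

lemma qnorm_le' {f : d → ℝ} {c : ℝ} (h0 : 0 ≤ c) (h : ∀ i, f i ≤ c) : qnorm f ≤ c :=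
  (Finset.fold_max_le c).2 ⟨h0, fun i _ => h i⟩

lemma le_qnorm' (f : d → ℝ) (i : d) : f i ≤ qnorm f :=
  (Finset.le_fold_max _).2 (Or.inr ⟨i, Finset.mem_univ i, le_rfl⟩)

lemma qnorm_nonneg' (f : d → ℝ) : (0:ℝ) ≤ qnorm f :=
  (Finset.le_fold_max _).2 (Or.inl le_rfl)

lemma infnorm_le' {f : d → ℝ} {c : ℝ} (h0 : 0 ≤ c) (h : ∀ i, |f i| ≤ c) : infnorm f ≤ c :=
  (Finset.fold_max_le c).2 ⟨h0, fun i _ => h i⟩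

lemma abs_le_infnorm' (f : d → ℝ) (i : d) : |f i| ≤ infnorm f :=
  (Finset.le_fold_max _).2 (Or.inr ⟨i, Finset.mem_univ i, le_rfl⟩)

variable [Nonempty d] {β : ℝ} (v : d → ℝ)

lemma sum_exp_pos' : 0 < ∑ i, Real.exp (β * v i) :=
  Finset.sum_pos (fun i _ => Real.exp_pos _) Finset.univ_nonempty

lemma gradLse_pos' (i : d) : 0 < gradLse β v i := div_pos (Real.exp_pos _) (sum_exp_pos' v)

lemma gradLse_sum' : ∑ i, gradLse β v i = 1 := by
  simp only [gradLse]
  rw [← Finset.sum_div, div_self (sum_exp_pos' v).ne']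

variable (hβ : 0 < β)
include hβ

lemma le_lse' (i : d) : v i ≤ lse β v := by
  have hS := sum_exp_pos' (β := β) v
  have h1 : Real.exp (β * v i) ≤ ∑ j, Real.exp (β * v j) :=
    Finset.single_le_sum (f := fun j => Real.exp (β * v j)) (fun j _ => (Real.exp_pos _).le)
      (Finset.mem_univ i)
  have h2 : β * v i ≤ Real.log (∑ j, Real.exp (β * v j)) := by
    rw [← Real.log_exp (β * v i)]
    exact Real.log_le_log (Real.exp_pos _) h1
  rw [lse]
  calc v i = (1/β) * (β * v i) := by field_simp
    _ ≤ (1/β) * Real.log (∑ j, Real.exp (β * v j)) :=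
      mul_le_mul_of_nonneg_left h2 (by positivity)

lemma lse_le' {M : ℝ} (h : ∀ i, v i ≤ M) :
    lse β v ≤ M + Real.log (Fintype.card d) / β := by
  have hcard : 0 < (Fintype.card d : ℝ) := by exact_mod_cast Fintype.card_pos
  have h1 : ∑ i, Real.exp (β * v i) ≤ (Fintype.card d : ℝ) * Real.exp (β * M) := by
    calc ∑ i, Real.exp (β * v i) ≤ ∑ _i : d, Real.exp (β * M) :=
          Finset.sum_le_sum fun i _ => Real.exp_le_exp.2 (mul_le_mul_of_nonneg_left (h i) hβ.le)
      _ = (Fintype.card d : ℝ) * Real.exp (β * M) := by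
          rw [Finset.sum_const, Finset.card_univ, nsmul_eq_mul]
  have h2 : Real.log (∑ i, Real.exp (β * v i)) ≤ Real.log (Fintype.card d) + β * M := by
    calc Real.log (∑ i, Real.exp (β * v i)) ≤ Real.log ((Fintype.card d : ℝ) * Real.exp (β * M)) :=
          Real.log_le_log (sum_exp_pos' v) h1
      _ = Real.log (Fintype.card d) + β * M := by
          rw [Real.log_mul hcard.ne' (Real.exp_pos _).ne', Real.log_exp]
  rw [lse]
  calc (1/β) * Real.log (∑ i, Real.exp (β * v i))
      ≤ (1/β) * (Real.log (Fintype.card d) + β * M) :=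
        mul_le_mul_of_nonneg_left h2 (by positivity)
    _ = M + Real.log (Fintype.card d) / β := by field_simp; ring

lemma lse_le_entropy' :
    lse β v ≤ (∑ i, gradLse β v i * v i) + Real.log (Fintype.card d) / β := by
  set S := ∑ i, Real.exp (β * v i) with hS
  have hSpos : 0 < S := sum_exp_pos' v
  have hcard : 0 < (Fintype.card d : ℝ) := by exact_mod_cast Fintype.card_pos
  set g := gradLse β v with hg
  have hgpos : ∀ i, 0 < g i := fun i => gradLse_pos' v i
  have hgsum : ∑ i, g i = 1 := gradLse_sum' v
  have hlogg : ∀ i, Real.log (g i) = β * v i - Real.log S := by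
    intro i
    rw [hg]
    simp only [gradLse]
    rw [Real.log_div (Real.exp_pos _).ne' hSpos.ne', Real.log_exp]
  have key : 0 ≤ Real.log (Fintype.card d) + ∑ i, g i * Real.log (g i) := by
    have h1 : ∀ i, -(g i * (Real.log (Fintype.card d) + Real.log (g i)))
        ≤ 1 / (Fintype.card d) - g i := by
      intro i
      have hy : 0 < 1 / ((Fintype.card d : ℝ) * g i) := div_pos one_pos (mul_pos hcard (hgpos i))
      have hlog := Real.log_le_sub_one_of_pos hy
      have hrw : Real.log (1 / ((Fintype.card d : ℝ) * g i))
          = -(Real.log (Fintype.card d) + Real.log (g i)) := by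
        rw [one_div, Real.log_inv, Real.log_mul hcard.ne' (hgpos i).ne']
      rw [hrw] at hlog
      have := mul_le_mul_of_nonneg_left hlog (hgpos i).le
      calc -(g i * (Real.log (Fintype.card d) + Real.log (g i)))
          = g i * -(Real.log (Fintype.card d) + Real.log (g i)) := by ring
        _ ≤ g i * (1 / ((Fintype.card d : ℝ) * g i) - 1) := this
        _ = 1 / (Fintype.card d) - g i := by
            field_simp [hcard.ne', (hgpos i).ne']
    have h2 : ∑ i, -(g i * (Real.log (Fintype.card d) + Real.log (g i)))
        ≤ ∑ i : d, (1 / (Fintype.card d : ℝ) - g i) :=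
      Finset.sum_le_sum fun i _ => h1 i
    have h3 : ∑ i : d, (1 / (Fintype.card d : ℝ) - g i) = 0 := by
      rw [Finset.sum_sub_distrib, hgsum, Finset.sum_const, Finset.card_univ, nsmul_eq_mul]
      field_simp; ring
    have h4 : ∑ i, -(g i * (Real.log (Fintype.card d) + Real.log (g i)))
        = -(Real.log (Fintype.card d) + ∑ i, g i * Real.log (g i)) := by
      have he : ∀ i ∈ Finset.univ, -(g i * (Real.log (Fintype.card d) + Real.log (g i)))
          = -(g i * Real.log (Fintype.card d) + g i * Real.log (g i)) := by
        intro i _; ring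
      rw [Finset.sum_congr rfl he, Finset.sum_neg_distrib, Finset.sum_add_distrib,
        ← Finset.sum_mul, hgsum]
      ring
    rw [h4, h3] at h2
    linarith
  have h5 : ∑ i, g i * Real.log (g i) = β * (∑ i, g i * v i) - Real.log S := by
    have he : ∀ i ∈ Finset.univ, g i * Real.log (g i) = β * (g i * v i) - g i * Real.log S := by
      intro i _; rw [hlogg i]; ring
    rw [Finset.sum_congr rfl he, Finset.sum_sub_distrib, ← Finset.mul_sum, ← Finset.sum_mul,
      hgsum, one_mul]
  rw [h5] at key
  rw [lse]
  have h6 : Real.log S ≤ β * (∑ i, g i * v i) + Real.log (Fintype.card d) := by linarith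
  calc (1/β) * Real.log S ≤ (1/β) * (β * (∑ i, g i * v i) + Real.log (Fintype.card d)) :=
        mul_le_mul_of_nonneg_left h6 (by positivity)
    _ = (∑ i, g i * v i) + Real.log (Fintype.card d) / β := by field_simp

end Helpers

/-- Adjointness of `R★` and `R★ᵀ` through `A`. -/
lemma adjoint' {n m : ℕ} (A : Matrix (Fin n) (Fin m) ℝ) {wp wm : Fin m → ℝ}
    (hwp : ∀ e, wp e ≠ 0) (hwm : ∀ e, wm e ≠ 0) (z : Fin n → ℝ) (G : Fin m ⊕ Fin m → ℝ) :
    z ⬝ᵥ (A *ᵥ RstarT wp wm G) = ∑ i, G i * Rstar wp wm (Aᵀ *ᵥ z) i := by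
  rw [Matrix.dotProduct_mulVec, ← Matrix.mulVec_transpose]
  rw [Fintype.sum_sum_type]
  simp only [Rstar, RstarT, dotProduct, Sum.elim_inl, Sum.elim_inr]
  rw [← Finset.sum_add_distrib]
  apply Finset.sum_congr rfl
  intro e _
  have h1 := hwp e
  have h2 := hwm e
  field_simp
  ring
set_option maxHeartbeats 2000000 in
/-- Correctness of the gradient descent output (Lemma 1.2). -/
theorem gradient_descent_correctness {n m : ℕ} (hn : 1 ≤ n) (hm : 1 ≤ m)
    (A : Matrix (Fin n) (Fin m) ℝ) (wp wm : Fin m → ℝ)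
    (hw : ∀ e, 0 < wm e ∧ wm e ≤ wp e)
    (lam : ℝ) (hlam : lam = ⨆ e : Fin m, wp e / wm e)
    (ε α β : ℝ) (hε : 0 < ε) (hε' : ε ≤ 1 / 2) (hα : 1 ≤ α) (hβ : 0 < β)
    (b π : Fin n → ℝ) (hbπ : b ⬝ᵥ π = 1)
    (hpot : 4 * Real.log (4 * (m : ℝ)) / (ε * β) ≤ pot A wp wm β π)
    -- `b̃ = Pᵀ∇φ_β(π)` where `P = I − πbᵀ`
    (btilde : Fin n → ℝ)
    (hbtilde : btilde = fun i =>
      gradPot A wp wm β π i - b i * (π ⬝ᵥ gradPot A wp wm β π))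
    (htilde : Fin n → ℝ)
    (hhfeas : infnorm (fun e => (Aᵀ *ᵥ htilde) e / wm e) ≤ 1)
    -- `Ph̃` where `P = I − πbᵀ`
    (Ph : Fin n → ℝ) (hPh : Ph = fun i => htilde i - π i * (b ⬝ᵥ htilde))
    (hNpos : 0 < infnorm (Rstar wp wm (Aᵀ *ᵥ Ph)))
    (δ : ℝ) (hδdef : δ = (btilde ⬝ᵥ htilde) / infnorm (Rstar wp wm (Aᵀ *ᵥ Ph)))
    (hδ : δ ≤ ε / (8 * α * lam ^ 2))
    (x₁ : Fin m → ℝ) (hx₁ : A *ᵥ x₁ = gradPot A wp wm β π)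
    (hx₁p : pnorm (Wstar wp wm x₁) ≤ 1 + ε / 8)
    (x₂ : Fin m → ℝ) (hx₂ : A *ᵥ x₂ = btilde)
    (hx₂n : onenorm (fun e => wm e * x₂ e) ≤ α * (btilde ⬝ᵥ htilde))
    (x : Fin m → ℝ) (hx : x = fun e => (x₁ e - x₂ e) / (π ⬝ᵥ gradPot A wp wm β π))
    (y : Fin n → ℝ) (hy : y = fun i => π i / qnorm (Rstar wp wm (Aᵀ *ᵥ π))) :
    0 < π ⬝ᵥ gradPot A wp wm β π ∧
    0 < qnorm (Rstar wp wm (Aᵀ *ᵥ π)) ∧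
    A *ᵥ x = b ∧
    qnorm (Rstar wp wm (Aᵀ *ᵥ y)) ≤ 1 ∧
    pnorm (Wstar wp wm x) ≤ (1 + ε) * (b ⬝ᵥ y) := by
  haveI : Nonempty (Fin m) := ⟨⟨0, hm⟩⟩
  have hwm : ∀ e, 0 < wm e := fun e => (hw e).1
  have hwp : ∀ e, 0 < wp e := fun e => lt_of_lt_of_le (hwm e) (hw e).2
  -- abbreviations
  set v : Fin m ⊕ Fin m → ℝ := Rstar wp wm (Aᵀ *ᵥ π) with hvdef
  set g : Fin m ⊕ Fin m → ℝ := gradLse β v with hgdef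
  set φ : ℝ := pot A wp wm β π with hφdef
  set Gv : ℝ := π ⬝ᵥ gradPot A wp wm β π with hGvdef
  set Q : ℝ := qnorm v with hQdef
  set N : ℝ := infnorm (Rstar wp wm (Aᵀ *ᵥ Ph)) with hNdef
  set t : ℝ := btilde ⬝ᵥ htilde with htdef
  set c : ℝ := b ⬝ᵥ htilde with hcdef
  have hpotv : φ = lse β v := by rw [hφdef, hvdef]; rfl
  have hgp : gradPot A wp wm β π = A *ᵥ RstarT wp wm g := by rw [hgdef, hvdef]; rfl
  clear_value v g φ Gv Q N t c
  -- lambda facts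
  have hbdd : BddAbove (Set.range fun e : Fin m => wp e / wm e) :=
    Set.Finite.bddAbove (Set.finite_range _)
  have hlamge : ∀ e, wp e / wm e ≤ lam := by
    intro e; rw [hlam]; exact le_ciSup hbdd e
  have hlam1 : (1:ℝ) ≤ lam := by
    refine le_trans ?_ (hlamge ⟨0, hm⟩)
    rw [le_div_iff₀ (hwm ⟨0, hm⟩)]
    simpa using (hw ⟨0, hm⟩).2
  have hlam0 : (0:ℝ) ≤ lam := by linarith only [hlam1]
  have hwple : ∀ e, wp e ≤ lam * wm e := fun e => (div_le_iff₀ (hwm e)).1 (hlamge e)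
  -- phi facts
  have hm1 : (1:ℝ) ≤ (m:ℝ) := by exact_mod_cast hm
  have hlog4 : 0 < Real.log (4 * m) := Real.log_pos (by linarith only [hm1])
  have hφpos : 0 < φ := lt_of_lt_of_le (div_pos (by linarith only [hlog4]) (by positivity)) hpot
  have hcard : ((Fintype.card (Fin m ⊕ Fin m)) : ℝ) = 2 * m := by
    rw [Fintype.card_sum, Fintype.card_fin]
    push_cast
    ring
  have hlog2m : Real.log (2 * m) ≤ Real.log (4 * m) :=
    Real.log_le_log (by positivity) (by linarith only [hm1])
  have hLφ : Real.log (2 * m) / β ≤ ε * φ / 4 := by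
    have h0 : 4 * Real.log (4 * m) ≤ φ * (ε * β) := (div_le_iff₀ (by positivity)).1 hpot
    rw [div_le_div_iff₀ hβ (by norm_num)]
    linarith only [h0, hlog2m]
  -- soft-max facts
  have hQle : ∀ i, v i ≤ Q := by rw [hQdef]; exact fun i => le_qnorm' v i
  have hQ0 : (0:ℝ) ≤ Q := by rw [hQdef]; exact qnorm_nonneg' v
  have hQφ : Q ≤ φ := by
    rw [hQdef, hpotv]
    exact qnorm_le' (by rw [← hpotv]; exact hφpos.le) (fun i => le_lse' v hβ i)
  have hφQL : φ ≤ Q + Real.log (2 * m) / β := by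
    have h := lse_le' v hβ hQle
    rw [hcard] at h
    rw [hpotv]; exact h
  have hGv2 : Gv = ∑ i, g i * v i := by
    rw [hGvdef, hgp, adjoint' A (fun e => (hwp e).ne') (fun e => (hwm e).ne') π g, ← hvdef]
  have hent : φ ≤ Gv + Real.log (2 * m) / β := by
    have h := lse_le_entropy' v hβ
    rw [hcard, ← hgdef] at h
    rw [hpotv, hGv2]
    exact h
  have hGlb : (1 - ε/4) * φ ≤ Gv := by linarith only [hLφ, hent]
  have hQlb : (1 - ε/4) * φ ≤ Q := by linarith only [hLφ, hφQL]
  have hεφ : ε * φ ≤ (1/2) * φ := mul_le_mul_of_nonneg_right hε' hφpos.le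
  have hGpos : 0 < Gv := by linarith only [hφpos, hGlb, hεφ]
  have hQpos : 0 < Q := by linarith only [hφpos, hQlb, hεφ]
  -- Part 3 : A x = b
  have hAx : A *ᵥ x = b := by
    funext i
    rw [hx]
    have h1 : (A *ᵥ fun e => (x₁ e - x₂ e) / Gv) i = ((A *ᵥ x₁) i - (A *ᵥ x₂) i) / Gv := by
      simp only [Matrix.mulVec, dotProduct]
      rw [← Finset.sum_sub_distrib, Finset.sum_div]
      apply Finset.sum_congr rfl
      intro e _
      ring
    rw [h1, hx₁, hx₂]
    simp only [hbtilde]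
    rw [sub_sub_cancel, mul_div_assoc, div_self hGpos.ne', mul_one]
  -- Part 4 : q(R★ Aᵀ y) ≤ 1
  have hAy : ∀ e, (Aᵀ *ᵥ y) e = (Aᵀ *ᵥ π) e / Q := by
    intro e
    rw [hy]
    simp only [Matrix.mulVec, dotProduct]
    rw [Finset.sum_div]
    apply Finset.sum_congr rfl
    intro i _
    ring
  have hvy : ∀ i, Rstar wp wm (Aᵀ *ᵥ y) i = v i / Q := by
    intro i
    cases i with
    | inl e => simp only [Rstar, Sum.elim_inl, hAy e, hvdef]; ring
    | inr e => simp only [Rstar, Sum.elim_inr, hAy e, hvdef]; ring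
  have hq1 : qnorm (Rstar wp wm (Aᵀ *ᵥ y)) ≤ 1 := by
    apply qnorm_le' zero_le_one
    intro i
    rw [hvy i]
    exact div_le_one_of_le₀ (hQle i) hQ0
  -- b ⬝ᵥ y = 1/Q
  have hby : b ⬝ᵥ y = 1 / Q := by
    rw [hy]
    simp only [dotProduct]
    have h1 : ∑ i, b i * (π i / Q) = (∑ i, b i * π i) / Q := by
      rw [Finset.sum_div]
      apply Finset.sum_congr rfl
      intro i _
      ring
    rw [h1, show (∑ i, b i * π i) = b ⬝ᵥ π from rfl, hbπ]
  -- pnorm decomposition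
  have hWx : ∀ i, Wstar wp wm x i = (Wstar wp wm x₁ i - Wstar wp wm x₂ i) / Gv := by
    intro i
    cases i with
    | inl e => simp only [Wstar, Sum.elim_inl, hx]; ring
    | inr e => simp only [Wstar, Sum.elim_inr, hx]; ring
  have hpx : pnorm (Wstar wp wm x)
      = (∑ i, max (Wstar wp wm x₁ i - Wstar wp wm x₂ i) 0) / Gv := by
    simp only [pnorm]
    rw [Finset.sum_div]
    apply Finset.sum_congr rfl
    intro i _
    rw [hWx i, ← max_div_div_right hGpos.le, zero_div]
  have habs : ∀ a bb : ℝ, max (a - bb) 0 ≤ max a 0 + max (-bb) 0 := by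
    intro a bb
    apply max_le
    · have h1 : a ≤ max a 0 := le_max_left _ _
      have h2 : -bb ≤ max (-bb) 0 := le_max_left _ _
      linarith only [h1, h2]
    · positivity
  have hOn0 : 0 ≤ onenorm (fun e => wm e * x₂ e) := Finset.sum_nonneg fun i _ => abs_nonneg _
  have hsplit : (∑ i, max (-(Wstar wp wm x₂ i)) 0) ≤ lam * onenorm (fun e => wm e * x₂ e) := by
    simp only [onenorm]
    rw [Fintype.sum_sum_type, Finset.mul_sum, ← Finset.sum_add_distrib]
    simp only [Wstar, Sum.elim_inl, Sum.elim_inr, neg_neg]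
    apply Finset.sum_le_sum
    intro e _
    rcases le_or_gt 0 (x₂ e) with hxe | hxe
    · have h1 : max (-(wp e * x₂ e)) 0 = 0 :=
        max_eq_right (neg_nonpos.2 (mul_nonneg (hwp e).le hxe))
      have h2 : max (wm e * x₂ e) 0 = wm e * x₂ e :=
        max_eq_left (mul_nonneg (hwm e).le hxe)
      have h3 : |wm e * x₂ e| = wm e * x₂ e := abs_of_nonneg (mul_nonneg (hwm e).le hxe)
      rw [h1, h2, h3]
      nlinarith only [hlam1, mul_nonneg (hwm e).le hxe]
    · have h1 : max (-(wp e * x₂ e)) 0 = -(wp e * x₂ e) :=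
        max_eq_left (neg_nonneg.2 (mul_nonpos_of_nonneg_of_nonpos (hwp e).le hxe.le))
      have h2 : max (wm e * x₂ e) 0 = 0 :=
        max_eq_right (mul_nonpos_of_nonneg_of_nonpos (hwm e).le hxe.le)
      have h3 : |wm e * x₂ e| = -(wm e * x₂ e) :=
        abs_of_neg (mul_neg_of_pos_of_neg (hwm e) hxe)
      rw [h1, h2, h3]
      nlinarith only [hwple e, hxe, hwm e]
  have hPuB : (∑ i, max (Wstar wp wm x₁ i - Wstar wp wm x₂ i) 0)
      ≤ (1 + ε/8) + lam * (α * t) := by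
    calc (∑ i, max (Wstar wp wm x₁ i - Wstar wp wm x₂ i) 0)
        ≤ ∑ i, (max (Wstar wp wm x₁ i) 0 + max (-(Wstar wp wm x₂ i)) 0) :=
          Finset.sum_le_sum fun i _ => habs _ _
      _ = pnorm (Wstar wp wm x₁) + ∑ i, max (-(Wstar wp wm x₂ i)) 0 := by
          rw [Finset.sum_add_distrib]; rfl
      _ ≤ (1 + ε/8) + lam * (α * t) := by
          have h2 : lam * onenorm (fun e => wm e * x₂ e) ≤ lam * (α * t) :=
            mul_le_mul_of_nonneg_left hx₂n hlam0
          linarith only [hx₁p, hsplit, h2]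
  -- t facts
  have hαt0 : 0 ≤ α * t := le_trans hOn0 hx₂n
  have ht0 : 0 ≤ t := by nlinarith only [hαt0, hα]
  have htδN : t = δ * N := by rw [hδdef, div_mul_cancel₀ _ hNpos.ne']
  have hδ0 : 0 ≤ δ := by rw [hδdef]; exact div_nonneg ht0 hNpos.le
  -- feasibility of htilde
  have hsb : ∀ e, |(Aᵀ *ᵥ htilde) e| ≤ wm e := by
    intro e
    have h := le_trans (abs_le_infnorm' (fun e => (Aᵀ *ᵥ htilde) e / wm e) e) hhfeas
    rw [abs_div, abs_of_pos (hwm e), div_le_one (hwm e)] at h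
    exact h
  have hcomp1 : ∀ i, |Rstar wp wm (Aᵀ *ᵥ htilde) i| ≤ 1 := by
    intro i
    cases i with
    | inl e =>
      simp only [Rstar, Sum.elim_inl]
      rw [abs_div, abs_of_pos (hwp e), div_le_one (hwp e)]
      exact le_trans (hsb e) (hw e).2
    | inr e =>
      simp only [Rstar, Sum.elim_inr, abs_neg]
      rw [abs_div, abs_of_pos (hwm e), div_le_one (hwm e)]
      exact hsb e
  have hgpos : ∀ i, 0 < g i := by rw [hgdef]; exact fun i => gradLse_pos' v i
  have hgsum : ∑ i, g i = 1 := by rw [hgdef]; exact gradLse_sum' v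
  have hr1 : |∑ i, g i * Rstar wp wm (Aᵀ *ᵥ htilde) i| ≤ 1 := by
    calc |∑ i, g i * Rstar wp wm (Aᵀ *ᵥ htilde) i|
        ≤ ∑ i, |g i * Rstar wp wm (Aᵀ *ᵥ htilde) i| := Finset.abs_sum_le_sum_abs _ _
      _ ≤ ∑ i, g i := by
          apply Finset.sum_le_sum
          intro i _
          rw [abs_mul, abs_of_pos (hgpos i)]
          calc g i * |Rstar wp wm (Aᵀ *ᵥ htilde) i| ≤ g i * 1 :=
                mul_le_mul_of_nonneg_left (hcomp1 i) (hgpos i).le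
            _ = g i := mul_one _
      _ = 1 := hgsum
  have hadj : ∀ z : Fin n → ℝ,
      z ⬝ᵥ gradPot A wp wm β π = ∑ i, g i * Rstar wp wm (Aᵀ *ᵥ z) i := by
    intro z
    rw [hgp]
    exact adjoint' A (fun e => (hwp e).ne') (fun e => (hwm e).ne') z g
  have htr : t = (∑ i, g i * Rstar wp wm (Aᵀ *ᵥ htilde) i) - c * Gv := by
    rw [htdef, hbtilde]
    show (∑ i, (gradPot A wp wm β π i - b i * Gv) * htilde i) = _
    have he : ∀ i ∈ Finset.univ, (gradPot A wp wm β π i - b i * Gv) * htilde i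
        = htilde i * gradPot A wp wm β π i - (b i * htilde i) * Gv := fun i _ => by ring
    rw [Finset.sum_congr rfl he, Finset.sum_sub_distrib, ← Finset.sum_mul]
    rw [show (∑ i, htilde i * gradPot A wp wm β π i) = htilde ⬝ᵥ gradPot A wp wm β π from rfl,
      hadj htilde,
      show (∑ i, b i * htilde i) = b ⬝ᵥ htilde from rfl, ← hcdef]
  have hcG : |c| * Gv ≤ 1 + t := by
    have h1 : |c * Gv| ≤ 1 + t := by
      have h2 : c * Gv = (∑ i, g i * Rstar wp wm (Aᵀ *ᵥ htilde) i) - t := by linarith only [htr]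
      rw [h2]
      calc |(∑ i, g i * Rstar wp wm (Aᵀ *ᵥ htilde) i) - t|
          ≤ |∑ i, g i * Rstar wp wm (Aᵀ *ᵥ htilde) i| + |t| := abs_sub _ _
        _ ≤ 1 + t := by rw [abs_of_nonneg ht0]; linarith only [hr1]
    rwa [abs_mul, abs_of_pos hGpos] at h1
  -- bound on N
  have hPh' : Aᵀ *ᵥ Ph = fun e => (Aᵀ *ᵥ htilde) e - c * (Aᵀ *ᵥ π) e := by
    funext e
    rw [hPh]
    simp only [Matrix.mulVec, dotProduct]
    rw [Finset.mul_sum, ← Finset.sum_sub_distrib]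
    apply Finset.sum_congr rfl
    intro i _
    ring
  have hvQ : ∀ e, |(Aᵀ *ᵥ π) e| / wm e ≤ lam * Q ∧ |(Aᵀ *ᵥ π) e| / wp e ≤ lam * Q := by
    intro e
    have h1 : (Aᵀ *ᵥ π) e / wp e ≤ Q := by
      have h := hQle (Sum.inl e)
      rw [hvdef] at h
      simpa only [Rstar, Sum.elim_inl] using h
    have h2 : -((Aᵀ *ᵥ π) e / wm e) ≤ Q := by
      have h := hQle (Sum.inr e)
      rw [hvdef] at h
      simpa only [Rstar, Sum.elim_inr] using h
    have hlamQ : Q ≤ lam * Q := by nlinarith only [hlam1, hQ0]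
    rcases le_or_gt 0 ((Aᵀ *ᵥ π) e) with hs | hs
    · constructor
      · rw [abs_of_nonneg hs]
        have hne1 := (hwp e).ne'
        have hne2 := (hwm e).ne'
        calc (Aᵀ *ᵥ π) e / wm e = ((Aᵀ *ᵥ π) e / wp e) * (wp e / wm e) := by
              field_simp
          _ ≤ Q * lam := mul_le_mul h1 (hlamge e) (div_nonneg (hwp e).le (hwm e).le) hQ0
          _ = lam * Q := mul_comm _ _
      · rw [abs_of_nonneg hs]; exact le_trans h1 hlamQ
    · have hs' : (0:ℝ) ≤ -((Aᵀ *ᵥ π) e) := by linarith only [hs]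
      constructor
      · rw [abs_of_neg hs]
        calc -(Aᵀ *ᵥ π) e / wm e = -((Aᵀ *ᵥ π) e / wm e) := by ring
          _ ≤ Q := h2
          _ ≤ lam * Q := hlamQ
      · rw [abs_of_neg hs]
        calc -(Aᵀ *ᵥ π) e / wp e ≤ -(Aᵀ *ᵥ π) e / wm e :=
              div_le_div_of_nonneg_left hs' (hwm e) (hw e).2
          _ = -((Aᵀ *ᵥ π) e / wm e) := by ring
          _ ≤ Q := h2
          _ ≤ lam * Q := hlamQ
  have hNb : N ≤ 1 + |c| * (lam * Q) := by
    have h0 : (0:ℝ) ≤ 1 + |c| * (lam * Q) := by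
      have h00 : 0 ≤ |c| * (lam * Q) := mul_nonneg (abs_nonneg c) (mul_nonneg hlam0 hQ0)
      linarith only [h00]
    rw [hNdef]
    apply infnorm_le' h0
    intro i
    rw [hPh']
    cases i with
    | inl e =>
      simp only [Rstar, Sum.elim_inl]
      calc |((Aᵀ *ᵥ htilde) e - c * (Aᵀ *ᵥ π) e) / wp e|
          = |(Aᵀ *ᵥ htilde) e - c * (Aᵀ *ᵥ π) e| / wp e := by
            rw [abs_div, abs_of_pos (hwp e)]
        _ ≤ (|(Aᵀ *ᵥ htilde) e| + |c| * |(Aᵀ *ᵥ π) e|) / wp e := by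
            apply (div_le_div_iff_of_pos_right (hwp e)).2
            calc |(Aᵀ *ᵥ htilde) e - c * (Aᵀ *ᵥ π) e|
                ≤ |(Aᵀ *ᵥ htilde) e| + |c * (Aᵀ *ᵥ π) e| := abs_sub _ _
              _ = |(Aᵀ *ᵥ htilde) e| + |c| * |(Aᵀ *ᵥ π) e| := by rw [abs_mul]
        _ = |(Aᵀ *ᵥ htilde) e| / wp e + |c| * (|(Aᵀ *ᵥ π) e| / wp e) := by ring
        _ ≤ 1 + |c| * (lam * Q) := by
            have ha : |(Aᵀ *ᵥ htilde) e| / wp e ≤ 1 := by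
              rw [div_le_one (hwp e)]; exact le_trans (hsb e) (hw e).2
            have hb := mul_le_mul_of_nonneg_left (hvQ e).2 (abs_nonneg c)
            linarith only [ha, hb]
    | inr e =>
      simp only [Rstar, Sum.elim_inr, abs_neg]
      calc |((Aᵀ *ᵥ htilde) e - c * (Aᵀ *ᵥ π) e) / wm e|
          = |(Aᵀ *ᵥ htilde) e - c * (Aᵀ *ᵥ π) e| / wm e := by
            rw [abs_div, abs_of_pos (hwm e)]
        _ ≤ (|(Aᵀ *ᵥ htilde) e| + |c| * |(Aᵀ *ᵥ π) e|) / wm e := by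
            apply (div_le_div_iff_of_pos_right (hwm e)).2
            calc |(Aᵀ *ᵥ htilde) e - c * (Aᵀ *ᵥ π) e|
                ≤ |(Aᵀ *ᵥ htilde) e| + |c * (Aᵀ *ᵥ π) e| := abs_sub _ _
              _ = |(Aᵀ *ᵥ htilde) e| + |c| * |(Aᵀ *ᵥ π) e| := by rw [abs_mul]
        _ = |(Aᵀ *ᵥ htilde) e| / wm e + |c| * (|(Aᵀ *ᵥ π) e| / wm e) := by ring
        _ ≤ 1 + |c| * (lam * Q) := by
            have ha : |(Aᵀ *ᵥ htilde) e| / wm e ≤ 1 := by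
              rw [div_le_one (hwm e)]; exact hsb e
            have hb := mul_le_mul_of_nonneg_left (hvQ e).1 (abs_nonneg c)
            linarith only [ha, hb]
  -- arithmetic endgame
  have hpos8 : (0:ℝ) < 8 * α * lam ^ 2 := by nlinarith only [hα, hlam1]
  have h8 : δ * (8 * α * lam ^ 2) ≤ ε := (le_div_iff₀ hpos8).1 hδ
  have hδ16 : δ * (16 * lam ^ 2) ≤ 1 := by
    have hcross : 0 ≤ δ * lam ^ 2 * (α - 1) :=
      mul_nonneg (mul_nonneg hδ0 (sq_nonneg lam)) (by linarith)
    linarith only [h8, hcross, hε']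
  have hδl : δ * lam ≤ 1 / 16 := by
    have hcross : 0 ≤ δ * lam * (lam - 1) := mul_nonneg (mul_nonneg hδ0 hlam0) (by linarith)
    linarith only [hδ16, hcross]
  have hδ1 : δ ≤ 1 / 16 := by
    have hcross : 0 ≤ δ * (lam ^ 2 - 1) := mul_nonneg hδ0 (by nlinarith only [hlam1])
    linarith only [hδ16, hcross]
  have hQG : Q ≤ (8/7) * Gv := by linarith only [hQφ, hGlb, hεφ]
  have hcQ : |c| * Q ≤ (8/7) * (1 + t) := by
    calc |c| * Q ≤ |c| * ((8/7) * Gv) := mul_le_mul_of_nonneg_left hQG (abs_nonneg c)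
      _ = (8/7) * (|c| * Gv) := by ring
      _ ≤ (8/7) * (1 + t) := by linarith only [hcG]
  have hNb2 : N ≤ 1 + (8/7) * lam * (1 + t) := by
    have h1 := mul_le_mul_of_nonneg_left hcQ hlam0
    calc N ≤ 1 + |c| * (lam * Q) := hNb
      _ = 1 + lam * (|c| * Q) := by ring
      _ ≤ 1 + lam * ((8/7) * (1 + t)) := by linarith only [h1]
      _ = 1 + (8/7) * lam * (1 + t) := by ring
  have ht16 : t ≤ 1/6 := by
    have h1 : t ≤ δ * (1 + (8/7) * lam * (1 + t)) := by
      calc t = δ * N := htδN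
        _ ≤ δ * (1 + (8/7) * lam * (1 + t)) := mul_le_mul_of_nonneg_left hNb2 hδ0
    have h2 : δ * lam * t ≤ (1/16) * t := mul_le_mul_of_nonneg_right hδl ht0
    linarith only [h1, h2, hδ1, ht0, hδl]
  have hN3 : N ≤ (7/3) * lam := by
    have h1 : lam * t ≤ lam * (1/6) := mul_le_mul_of_nonneg_left ht16 hlam0
    linarith only [hNb2, h1, hlam1]
  have hkey : lam * (α * t) ≤ (7/24) * ε := by
    have h2 : (8 * lam ^ 2) * (α * t) ≤ ε * N := by
      rw [htδN]
      linarith only [mul_le_mul_of_nonneg_right h8 hNpos.le]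
    have h4 : (8 * lam ^ 2) * (α * t) ≤ (7/3) * ε * lam := by
      calc (8 * lam ^ 2) * (α * t) ≤ ε * N := h2
        _ ≤ ε * ((7/3) * lam) := mul_le_mul_of_nonneg_left hN3 hε.le
        _ = (7/3) * ε * lam := by ring
    have hlampos : (0:ℝ) < lam := by linarith
    have h5 : lam * ((8 * lam) * (α * t)) ≤ lam * ((7/3) * ε) := by linarith only [h4]
    have h6 : (8 * lam) * (α * t) ≤ (7/3) * ε := le_of_mul_le_mul_left h5 hlampos
    linarith only [h6]
  -- final assembly
  refine ⟨hGpos, hQpos, hAx, hq1, ?_⟩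
  rw [hpx, hby, mul_one_div, div_le_div_iff₀ hGpos hQpos]
  have hPuQ : (∑ i, max (Wstar wp wm x₁ i - Wstar wp wm x₂ i) 0) * Q
      ≤ ((1 + ε/8) + lam * (α * t)) * Q :=
    mul_le_mul_of_nonneg_right hPuB hQ0
  have hfin : ((1 + ε/8) + lam * (α * t)) * Q ≤ (1 + ε) * Gv := by
    have hcoef : (0:ℝ) ≤ (1 + ε/8) + lam * (α * t) := by
      have h00 := mul_nonneg hlam0 hαt0
      linarith only [h00, hε.le]
    have h1 : ((1 + ε/8) + lam * (α * t)) * Q ≤ ((1 + ε/8) + lam * (α * t)) * φ :=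
      mul_le_mul_of_nonneg_left hQφ hcoef
    have h2 : (1 + ε) * ((1 - ε/4) * φ) ≤ (1 + ε) * Gv :=
      mul_le_mul_of_nonneg_left hGlb (by linarith only [hε.le])
    have h4 : (1 + ε/8) + lam * (α * t) ≤ (1 + ε) * (1 - ε/4) := by
      linarith only [hkey, hε.le, mul_le_mul_of_nonneg_right hε' hε.le]
    have h3 : ((1 + ε/8) + lam * (α * t)) * φ ≤ (1 + ε) * ((1 - ε/4) * φ) := by
      linarith only [mul_le_mul_of_nonneg_right h4 hφpos.le]
    linarith only [h1, h2, h3]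
  linarith only [hPuQ, hfin]
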